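/- For n ≥ 5, consider the natural action of the alternating group Alt(n) on {1,…,n}. Every (Alt(n), {1,…,n})-Cameron–Liebler set is canonical, i.e., every CL set is a disjoint union of stars Alt(n)_{a→b} = {g ∈ Alt(n) : g(a) = b}. -/

import Mathlib

/-- The indicator vector (in `ℂ^G`) of a subset of `G`. -/
noncomputable def indicatorVec {G : Type*} (S : Set G) : G → ℂ :=
  Set.indicator S fun _ => (1 : ℂ)

/-- A subset `L ⊆ G` is a `(G,Ω)`-Cameron–Liebler set if its indicator vector lies in the
`ℂ`-linear span of the indicator vectors of the stars `G_{a→b} = {g : G | g • a = b}`. -/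
def IsCLSet (G : Type*) [Group G] (Ω : Type*) [MulAction G Ω] (L : Set G) : Prop :=
  indicatorVec L ∈
    Submodule.span ℂ {f : G → ℂ | ∃ a b : Ω, f = indicatorVec {g : G | g • a = b}}

open Equiv Finset

section CLAux
variable {n : ℕ}

lemma exists_coeffs {n : ℕ} (L : Set (alternatingGroup (Fin n)))
    (hL : IsCLSet (alternatingGroup (Fin n)) (Fin n) L) :
    ∃ c : Fin n → Fin n → ℝ, ∀ g : alternatingGroup (Fin n),
      (g ∈ L → (∑ a, c a ((g : Equiv.Perm (Fin n)) a)) = 1) ∧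
      (g ∉ L → (∑ a, c a ((g : Equiv.Perm (Fin n)) a)) = 0) := by
  classical
  rw [IsCLSet, Submodule.mem_span_set'] at hL
  obtain ⟨m, t, v, hv⟩ := hL
  choose A B hAB using fun i => (v i).2
  refine ⟨fun a b => (∑ i, if A i = a ∧ B i = b then t i else 0).re, fun g => ?_⟩
  have h2 : ∀ i, (↑(v i) : _ → ℂ) g = if B i = (g : Equiv.Perm (Fin n)) (A i) then 1 else 0 := by
    intro i
    rw [hAB i]
    simp only [indicatorVec, Set.indicator_apply, Set.mem_setOf_eq]
    have h3 : ((g • A i = B i)) ↔ (B i = (g : Equiv.Perm (Fin n)) (A i)) := eq_comm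
    simp [h3]
  have hC : (∑ a, ∑ i, if A i = a ∧ B i = (g : Equiv.Perm (Fin n)) a then t i else 0)
      = indicatorVec L g := by
    rw [Finset.sum_comm]
    have hinner : ∀ i, (∑ a, if A i = a ∧ B i = (g : Equiv.Perm (Fin n)) a then t i else 0)
        = t i • (↑(v i) : _ → ℂ) g := by
      intro i
      rw [h2 i]
      have hsplit : ∀ a : Fin n, (if A i = a ∧ B i = (g : Equiv.Perm (Fin n)) a then t i else 0)
          = if A i = a then (if B i = (g : Equiv.Perm (Fin n)) a then t i else 0) else 0 := by
        intro a
        by_cases h : A i = a <;> by_cases h' : B i = (g : Equiv.Perm (Fin n)) a <;> simp [h, h']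
      rw [Finset.sum_congr rfl fun a _ => hsplit a, Finset.sum_ite_eq]
      simp only [Finset.mem_univ, if_true, smul_eq_mul]
      by_cases h : B i = (g : Equiv.Perm (Fin n)) (A i) <;> simp [h]
    rw [Finset.sum_congr rfl fun i _ => hinner i]
    have := congrFun hv g
    rw [Finset.sum_apply] at this
    simpa using this
  have hre := congrArg Complex.re hC
  rw [Complex.re_sum] at hre
  constructor
  · intro h
    rw [hre]
    simp [indicatorVec, Set.indicator_apply, h]
  · intro h
    rw [hre]
    simp [indicatorVec, Set.indicator_apply, h]

lemma two_outside {n : ℕ} (hn : 5 ≤ n) (s : Finset (Fin n)) (hs : s.card + 2 ≤ n) :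
    ∃ p q : Fin n, p ≠ q ∧ p ∉ s ∧ q ∉ s := by
  have h : 1 < sᶜ.card := by
    rw [Finset.card_compl, Fintype.card_fin]
    omega
  obtain ⟨p, hp, q, hq, hpq⟩ := Finset.one_lt_card.mp h
  exact ⟨p, q, hpq, Finset.mem_compl.mp hp, Finset.mem_compl.mp hq⟩

lemma exists_even_extends {n : ℕ} (hn : 5 ≤ n) (s : Finset (Fin n)) (hs : s.card + 2 ≤ n)
    (φ : Fin n → Fin n) (hφ : Set.InjOn φ s) :
    ∃ π : Equiv.Perm (Fin n), π.sign = 1 ∧ ∀ a ∈ s, π a = φ a := by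
  classical
  have hinj : Function.Injective fun x : {x // x ∈ s} =>
      (⟨φ x, Finset.mem_image_of_mem φ x.2⟩ : {y // y ∈ s.image φ}) := by
    rintro ⟨x, hx⟩ ⟨y, hy⟩ h
    simp only [Subtype.mk.injEq] at h ⊢
    exact hφ (Finset.mem_coe.mpr hx) (Finset.mem_coe.mpr hy) h
  have hcard : Fintype.card {x // x ∈ s} = Fintype.card {y // y ∈ s.image φ} := by
    simp only [Fintype.card_coe]
    exact (Finset.card_image_of_injOn hφ).symm
  have hbij := (Fintype.bijective_iff_injective_and_card _).mpr ⟨hinj, hcard⟩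
  set e := Equiv.ofBijective _ hbij with he
  set π₀ := e.extendSubtype with hπ₀def
  have hπ₀ : ∀ a ∈ s, π₀ a = φ a := by
    intro a ha
    rw [hπ₀def, Equiv.extendSubtype_apply_of_mem e a ha]
    rfl
  obtain ⟨p, q, hpq, hp, hq⟩ := two_outside hn s hs
  rcases Int.units_eq_one_or (Equiv.Perm.sign π₀) with h1 | h1
  · exact ⟨π₀, h1, hπ₀⟩
  · refine ⟨π₀ * Equiv.swap p q, ?_, ?_⟩
    · rw [Equiv.Perm.sign_mul, h1, Equiv.Perm.sign_swap hpq]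
      norm_num
    · intro a ha
      rw [Equiv.Perm.mul_apply,
        Equiv.swap_apply_of_ne_of_ne (by rintro rfl; exact hp ha) (by rintro rfl; exact hq ha)]
      exact hπ₀ a ha

lemma exists_even_three {n : ℕ} (hn : 5 ≤ n) {a b d x y z : Fin n}
    (hab : a ≠ b) (had : a ≠ d) (hbd : b ≠ d)
    (hxy : x ≠ y) (hxz : x ≠ z) (hyz : y ≠ z) :
    ∃ π : Equiv.Perm (Fin n), π.sign = 1 ∧ π a = x ∧ π b = y ∧ π d = z := by
  classical
  set φ : Fin n → Fin n := fun t => if t = a then x else if t = b then y else z with hφdef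
  have hφa : φ a = x := by simp [hφdef]
  have hφb : φ b = y := by simp [hφdef, hab.symm]
  have hφd : φ d = z := by simp [hφdef, had.symm, hbd.symm]
  have hcard : ({a, b, d} : Finset (Fin n)).card = 3 := by
    rw [Finset.card_insert_of_notMem (by simp [hab, had]),
      Finset.card_insert_of_notMem (by simp [hbd]), Finset.card_singleton]
  have hinj : Set.InjOn φ ({a, b, d} : Finset (Fin n)) := by
    intro s hs t ht hst
    clear_value φ
    clear hφdef
    simp only [Finset.coe_insert, Set.mem_insert_iff, Finset.coe_singleton,
      Set.mem_singleton_iff] at hs ht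
    rcases hs with rfl | rfl | rfl <;> rcases ht with rfl | rfl | rfl <;>
      simp_all [hφa, hφb, hφd] <;> tauto
  obtain ⟨π, hsign, hπ⟩ := exists_even_extends hn _ (by rw [hcard]; omega) φ hinj
  exact ⟨π, hsign, by rw [hπ a (by simp), hφa], by rw [hπ b (by simp), hφb],
    by rw [hπ d (by simp), hφd]⟩

lemma exists_even_image {n : ℕ} (hn : 5 ≤ n) (A S : Finset (Fin n))
    (hcard : A.card = S.card) (hA : A.card + 2 ≤ n) :
    ∃ π : Equiv.Perm (Fin n), π.sign = 1 ∧ A.image (fun t => π t) = S := by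
  classical
  have hc : Fintype.card {x // x ∈ A} = Fintype.card {x // x ∈ S} := by
    simp only [Fintype.card_coe]; exact hcard
  set e := Fintype.equivOfCardEq hc with he
  set φ : Fin n → Fin n := fun t => if h : t ∈ A then (e ⟨t, h⟩ : Fin n) else t with hφdef
  have hinj : Set.InjOn φ A := by
    intro s hs t ht hst
    simp only [Finset.mem_coe] at hs ht
    rw [hφdef] at hst
    simp only [dif_pos hs, dif_pos ht] at hst
    have h2 := e.injective (Subtype.ext hst)
    exact congrArg Subtype.val h2
  obtain ⟨π, hsign, hπ⟩ := exists_even_extends hn A hA φ hinj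
  refine ⟨π, hsign, ?_⟩
  have himg : A.image (fun t => π t) = A.image φ := Finset.image_congr fun t ht => hπ t ht
  rw [himg]
  apply Finset.eq_of_subset_of_card_le
  · intro yy hy
    obtain ⟨t, ht, rfl⟩ := Finset.mem_image.mp hy
    rw [hφdef]
    simp only [dif_pos ht]
    exact (e ⟨t, ht⟩).2
  · rw [Finset.card_image_of_injOn hinj, ← hcard]

abbrev InS (r : ℝ) : Prop := r = -1 ∨ r = 0 ∨ r = 1

abbrev Constr (g h : Fin n → ℝ) : Prop :=
  ∀ x y z : Fin n, x ≠ y → x ≠ z → y ≠ z → InS (g y - g x + (h z - h y))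

abbrev InD (r : ℝ) : Prop := r = -2 ∨ r = -1 ∨ r = 0 ∨ r = 1 ∨ r = 2

lemma T_mem (hn : 5 ≤ n) (c : Fin n → Fin n → ℝ)
    (hf : ∀ π : Equiv.Perm (Fin n), π.sign = 1 →
      (∑ t, c t (π t)) = 0 ∨ (∑ t, c t (π t)) = 1)
    {a b d x y z : Fin n}
    (hab : a ≠ b) (had : a ≠ d) (hbd : b ≠ d)
    (hxy : x ≠ y) (hxz : x ≠ z) (hyz : y ≠ z) :
    InS ((c a y + c b z + c d x) - (c a x + c b y + c d z)) := by
  classical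
  obtain ⟨π, hsign, hπa, hπb, hπd⟩ := exists_even_three hn hab had hbd hxy hxz hyz
  obtain ⟨γ, hγa, hγb, hγd, hγfix, hγsign⟩ :
      ∃ γ : Equiv.Perm (Fin n), γ a = b ∧ γ b = d ∧ γ d = a ∧
        (∀ t : Fin n, t ≠ a → t ≠ b → t ≠ d → γ t = t) ∧ γ.sign = 1 := by
    refine ⟨Equiv.swap a d * Equiv.swap a b, ?_, ?_, ?_, ?_, ?_⟩
    · rw [Equiv.Perm.mul_apply, Equiv.swap_apply_left,
        Equiv.swap_apply_of_ne_of_ne hab.symm hbd]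
    · rw [Equiv.Perm.mul_apply, Equiv.swap_apply_right, Equiv.swap_apply_left]
    · rw [Equiv.Perm.mul_apply, Equiv.swap_apply_of_ne_of_ne had.symm hbd.symm,
        Equiv.swap_apply_right]
    · intro t h1 h2 h3
      rw [Equiv.Perm.mul_apply, Equiv.swap_apply_of_ne_of_ne h1 h2,
        Equiv.swap_apply_of_ne_of_ne h1 h3]
    · rw [Equiv.Perm.sign_mul, Equiv.Perm.sign_swap had, Equiv.Perm.sign_swap hab]
      norm_num
  have habd : ({a, b, d} : Finset (Fin n)) ⊆ Finset.univ := Finset.subset_univ _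
  have hvanish : ∀ t ∈ Finset.univ, t ∉ ({a, b, d} : Finset (Fin n)) →
      c t ((π * γ) t) - c t (π t) = 0 := by
    intro t _ ht
    simp only [Finset.mem_insert, Finset.mem_singleton, not_or] at ht
    rw [Equiv.Perm.mul_apply, hγfix t ht.1 ht.2.1 ht.2.2]
    ring
  have hdiff : (∑ t, c t ((π * γ) t)) - (∑ t, c t (π t))
      = (c a y + c b z + c d x) - (c a x + c b y + c d z) := by
    rw [← Finset.sum_sub_distrib, ← Finset.sum_subset habd hvanish]
    rw [Finset.sum_insert (by simp [hab, had]), Finset.sum_insert (by simp [hbd]),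
      Finset.sum_singleton]
    rw [Equiv.Perm.mul_apply, Equiv.Perm.mul_apply, Equiv.Perm.mul_apply,
      hγa, hγb, hγd, hπa, hπb, hπd]
    ring
  have h1 := hf π hsign
  have h2 := hf (π * γ) (by rw [Equiv.Perm.sign_mul, hsign, hγsign]; norm_num)
  rw [← hdiff]
  rcases h1 with h1 | h1 <;> rcases h2 with h2 | h2 <;> rw [h1, h2] <;> norm_num [InS]

lemma diff_bound (hn : 5 ≤ n) {g h : Fin n → ℝ} (H : Constr g h)
    {z z' : Fin n} (hzz : z ≠ z') : InD (h z - h z') := by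
  have hcard : ({z, z'} : Finset (Fin n)).card + 2 ≤ n := by
    have h1 := Finset.card_insert_le z ({z'} : Finset (Fin n))
    simp only [Finset.card_singleton] at h1
    omega
  obtain ⟨x, y, hxy, hx, hy⟩ := two_outside hn {z, z'} hcard
  simp only [Finset.mem_insert, Finset.mem_singleton, not_or] at hx hy
  have h1 := H x y z hxy hx.1 hy.1
  have h2 := H x y z' hxy hx.2 hy.2
  have key : h z - h z' = (g y - g x + (h z - h y)) - (g y - g x + (h z' - h y)) := by ring
  rw [key]
  rcases h1 with h1|h1|h1 <;> rcases h2 with h2|h2|h2 <;> rw [h1, h2] <;> norm_num [InD]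

lemma osc2_aux (hn : 5 ≤ n) {g h : Fin n → ℝ} (Hgh : Constr g h)
    {α β : Fin n} (hαβ : α ≠ β) (hosc : g β - g α = 2) :
    h β - h α = 2 ∧ ∀ z, z ≠ α → z ≠ β → h z = h α + 1 := by
  have hub : ∀ z, z ≠ α → z ≠ β → h z ≤ h β - 1 := by
    intro z hzα hzβ
    have h1 := Hgh α β z hαβ (Ne.symm hzα) (Ne.symm hzβ)
    rcases h1 with h1|h1|h1 <;> linarith
  have hlb : ∀ z, z ≠ α → z ≠ β → h α + 1 ≤ h z := by
    intro z hzα hzβ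
    have h1 := Hgh β α z (Ne.symm hαβ) (Ne.symm hzβ) (Ne.symm hzα)
    rcases h1 with h1|h1|h1 <;> linarith
  have hd : InD (h β - h α) := diff_bound hn Hgh hαβ.symm
  have hcard : ({α, β} : Finset (Fin n)).card + 2 ≤ n := by
    have h1 := Finset.card_insert_le α ({β} : Finset (Fin n))
    simp only [Finset.card_singleton] at h1
    omega
  obtain ⟨p, q, hpq, hp, hq⟩ := two_outside hn {α, β} hcard
  simp only [Finset.mem_insert, Finset.mem_singleton, not_or] at hp
  have h1 := hub p hp.1 hp.2
  have h2 := hlb p hp.1 hp.2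
  have hβα : h β - h α = 2 := by rcases hd with h'|h'|h'|h'|h' <;> linarith
  exact ⟨hβα, fun z hzα hzβ =>
    le_antisymm (by linarith [hub z hzα hzβ]) (by linarith [hlb z hzα hzβ])⟩

lemma osc2_case (hn : 5 ≤ n) {g h : Fin n → ℝ} (Hgh : Constr g h) (Hhg : Constr h g)
    {α β : Fin n} (hαβ : α ≠ β) (hosc : g β - g α = 2) :
    ∀ s t : Fin n, g s - h s = g t - h t := by
  obtain ⟨hh2, hhz⟩ := osc2_aux hn Hgh hαβ hosc
  obtain ⟨hg2, hgz⟩ := osc2_aux hn Hhg hαβ hh2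
  have hconst : ∀ s, g s - h s = g α - h α := by
    intro s
    by_cases h1 : s = α
    · rw [h1]
    · by_cases h2 : s = β
      · rw [h2]; linarith
      · rw [hgz s h1 h2, hhz s h1 h2]; ring
  intro s t; rw [hconst s, hconst t]

lemma rows3_false (hn : 5 ≤ n) (u v : Fin n → ℝ)
    (C1 : Constr u v) (C2 : Constr v u)
    (C3 : Constr (fun t => u t - v t) (fun t => -v t))
    (C4 : Constr (fun t => -v t) (fun t => u t - v t))
    (hu : ∃ s t, u s ≠ u t) (hv : ∃ s t, v s ≠ v t)
    (huv : ∃ s t, u s - v s ≠ u t - v t) : False := by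
  haveI : Nonempty (Fin n) := ⟨⟨0, by omega⟩⟩
  -- max/min for u
  obtain ⟨βu, -, hβu'⟩ := Finset.exists_max_image Finset.univ u ⟨Classical.arbitrary _, Finset.mem_univ _⟩
  obtain ⟨αu, -, hαu'⟩ := Finset.exists_min_image Finset.univ u ⟨Classical.arbitrary _, Finset.mem_univ _⟩
  have hup : ∀ t, u t ≤ u βu := fun t => hβu' t (Finset.mem_univ _)
  have hlow : ∀ t, u αu ≤ u t := fun t => hαu' t (Finset.mem_univ _)
  obtain ⟨βv, -, hβv'⟩ := Finset.exists_max_image Finset.univ v ⟨Classical.arbitrary _, Finset.mem_univ _⟩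
  obtain ⟨αv, -, hαv'⟩ := Finset.exists_min_image Finset.univ v ⟨Classical.arbitrary _, Finset.mem_univ _⟩
  have hvp : ∀ t, v t ≤ v βv := fun t => hβv' t (Finset.mem_univ _)
  have hvlow : ∀ t, v αv ≤ v t := fun t => hαv' t (Finset.mem_univ _)
  obtain ⟨βs, -, hβs'⟩ := Finset.exists_max_image Finset.univ (fun t => u t - v t) ⟨Classical.arbitrary _, Finset.mem_univ _⟩
  obtain ⟨αs, -, hαs'⟩ := Finset.exists_min_image Finset.univ (fun t => u t - v t) ⟨Classical.arbitrary _, Finset.mem_univ _⟩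
  have hsp : ∀ t, u t - v t ≤ u βs - v βs := fun t => hβs' t (Finset.mem_univ _)
  have hslow : ∀ t, u αs - v αs ≤ u t - v t := fun t => hαs' t (Finset.mem_univ _)
  -- nonconstancy gives strict gaps
  have hneu : u αu < u βu := by
    rcases lt_or_ge (u αu) (u βu) with h | h
    · exact h
    · exfalso; obtain ⟨s, t, hst⟩ := hu
      exact hst (le_antisymm (le_trans (hup s) (le_trans h (hlow t)))
        (le_trans (hup t) (le_trans h (hlow s))))
  have hnev : v αv < v βv := by
    rcases lt_or_ge (v αv) (v βv) with h | h
    · exact h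
    · exfalso; obtain ⟨s, t, hst⟩ := hv
      exact hst (le_antisymm (le_trans (hvp s) (le_trans h (hvlow t)))
        (le_trans (hvp t) (le_trans h (hvlow s))))
  have hnes : u αs - v αs < u βs - v βs := by
    rcases lt_or_ge (u αs - v αs) (u βs - v βs) with h | h
    · exact h
    · exfalso; obtain ⟨s, t, hst⟩ := huv
      exact hst (le_antisymm (le_trans (hsp s) (le_trans h (hslow t)))
        (le_trans (hsp t) (le_trans h (hslow s))))
  have hneαβu : αu ≠ βu := fun h => absurd (congrArg u h) (ne_of_lt hneu)
  have hneαβv : αv ≠ βv := fun h => absurd (congrArg v h) (ne_of_lt hnev)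
  have hneαβs : αs ≠ βs := by
    intro h; rw [h] at hnes; exact lt_irrefl _ hnes
  -- oscillations are 1 or 2
  have hdu := diff_bound hn C2 (Ne.symm hneαβu)
  have hdv := diff_bound hn C1 (Ne.symm hneαβv)
  have hds := diff_bound hn C4 (Ne.symm hneαβs)
  have ou : u βu - u αu = 1 ∨ u βu - u αu = 2 := by
    rcases hdu with h|h|h|h|h
    · exfalso; linarith
    · exfalso; linarith
    · exfalso; linarith
    · exact Or.inl h
    · exact Or.inr h
  have ov : v βv - v αv = 1 ∨ v βv - v αv = 2 := by
    rcases hdv with h|h|h|h|h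
    · exfalso; linarith
    · exfalso; linarith
    · exfalso; linarith
    · exact Or.inl h
    · exact Or.inr h
  have os : (u βs - v βs) - (u αs - v αs) = 1 ∨ (u βs - v βs) - (u αs - v αs) = 2 := by
    rcases hds with h|h|h|h|h
    · exfalso; linarith
    · exfalso; linarith
    · exfalso; linarith
    · left; linarith
    · right; linarith
  -- case osc u = 2
  by_cases hcu : u βu - u αu = 2
  · have hconst := osc2_case hn C1 C2 hneαβu hcu
    obtain ⟨s, t, hst⟩ := huv
    exact hst (hconst s t)
  by_cases hcv : v βv - v αv = 2
  · have hconst := osc2_case hn C2 C1 hneαβv hcv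
    obtain ⟨s, t, hst⟩ := huv
    have := hconst s t
    apply hst; linarith
  by_cases hcs : (u βs - v βs) - (u αs - v αs) = 2
  · have hconst := osc2_case hn C3 C4 hneαβs (by linarith)
    obtain ⟨s, t, hst⟩ := hu
    have h2 := hconst s t
    apply hst; linarith
  -- all oscillations equal 1
  have h1u : u βu - u αu = 1 := ou.resolve_right hcu
  have h1v : v βv - v αv = 1 := ov.resolve_right hcv
  have h1s : (u βs - v βs) - (u αs - v αs) = 1 := os.resolve_right hcs
  have hu2 : ∀ t, u t = u αu ∨ u t = u αu + 1 := by
    intro t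
    by_cases ht : t = αu
    · left; rw [ht]
    · have hd := diff_bound hn C2 (show t ≠ αu from ht)
      have l1 : u t ≤ u αu + 1 := by linarith [hup t]
      have l2 : u αu ≤ u t := hlow t
      rcases hd with h|h|h|h|h
      · exfalso; linarith
      · exfalso; linarith
      · left; linarith
      · right; linarith
      · exfalso; linarith
  have hv2 : ∀ t, v t = v αv ∨ v t = v αv + 1 := by
    intro t
    by_cases ht : t = αv
    · left; rw [ht]
    · have hd := diff_bound hn C1 (show t ≠ αv from ht)
      have l1 : v t ≤ v αv + 1 := by linarith [hvp t]
      have l2 : v αv ≤ v t := hvlow t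
      rcases hd with h|h|h|h|h
      · exfalso; linarith
      · exfalso; linarith
      · left; linarith
      · right; linarith
      · exfalso; linarith
  -- the indicator sets
  have hXβu : u βu = u αu + 1 := by linarith
  have hnXαu : ¬ u αu = u αu + 1 := by intro h; linarith
  have hYβv : v βv = v αv + 1 := by linarith
  have hnYαv : ¬ v αv = v αv + 1 := by intro h; linarith
  -- dichotomy
  have hdir : (∀ t, u t = u αu + 1 → v t = v αv + 1) ∨
      (∀ t, v t = v αv + 1 → u t = u αu + 1) := by
    by_contra hcon
    push_neg at hcon
    obtain ⟨⟨p, hXp, hnYp⟩, ⟨q, hYq, hnXq⟩⟩ := hcon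
    have hvp' : v p = v αv := (hv2 p).resolve_right hnYp
    have huq : u q = u αu := (hu2 q).resolve_right hnXq
    have e1 : u p - v p ≤ u βs - v βs := hsp p
    have e2 : u αs - v αs ≤ u q - v q := hslow q
    rw [hXp, hvp'] at e1
    rw [huq, hYq] at e2
    linarith
  have hiff_false : ¬(∀ t, (u t = u αu + 1 ↔ v t = v αv + 1)) := by
    intro hiff
    obtain ⟨s, t, hst⟩ := huv
    apply hst
    have hval : ∀ r, u r - v r = u αu - v αv := by
      intro r
      rcases hu2 r with h|h <;> rcases hv2 r with h'|h'
      · rw [h, h']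
      · exfalso; exact absurd ((hiff r).mpr h') (by rw [h]; exact hnXαu)
      · exfalso; exact absurd ((hiff r).mp h) (by rw [h']; exact hnYαv)
      · rw [h, h']; ring
    rw [hval s, hval t]
  rcases hdir with hXY | hYX
  · -- X ⊆ Y; find y₀ ∈ Y \ X
    have hex : ∃ t, v t = v αv + 1 ∧ ¬ u t = u αu + 1 := by
      by_contra hne
      push_neg at hne
      exact hiff_false fun t => ⟨hXY t, fun h' => (hne t h')⟩
    obtain ⟨y₀, hYy₀, hnXy₀⟩ := hex
    have huy₀ : u y₀ = u αu := (hu2 y₀).resolve_right hnXy₀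
    have hd1 : αv ≠ y₀ := fun h => hnYαv (h ▸ hYy₀)
    have hd2 : αv ≠ βu := by
      intro h
      exact hnYαv ((h ▸ (hXY βu hXβu)) : v αv = v αv + 1)
    have hd3 : y₀ ≠ βu := fun h => hnXy₀ (h ▸ hXβu)
    have := C2 αv y₀ βu hd1 hd2 hd3
    rw [hYy₀, hXβu, huy₀] at this
    rcases this with h|h|h <;> linarith [hvlow αv, hvlow y₀]
  · -- Y ⊆ X; find x point in X \ Y
    have hex : ∃ t, u t = u αu + 1 ∧ ¬ v t = v αv + 1 := by
      by_contra hne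
      push_neg at hne
      exact hiff_false fun t => ⟨fun h' => (hne t h'), hYX t⟩
    obtain ⟨y₀, hXy₀, hnYy₀⟩ := hex
    have hvy₀ : v y₀ = v αv := (hv2 y₀).resolve_right hnYy₀
    have hd1 : αu ≠ y₀ := fun h => hnXαu (h ▸ hXy₀)
    have hd2 : αu ≠ βv := by
      intro h
      exact hnXαu ((h ▸ (hYX βv hYβv)) : u αu = u αu + 1)
    have hd3 : y₀ ≠ βv := fun h => hnYy₀ (h ▸ hYβv)
    have := C1 αu y₀ βv hd1 hd2 hd3
    rw [hXy₀, hYβv, hvy₀] at this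
    rcases this with h|h|h <;> linarith [hlow αu, hlow y₀]


lemma three_vals {a b c : ℝ} (h1 : a = 0 ∨ a = 1) (h2 : b = 0 ∨ b = 1) (h3 : c = 0 ∨ c = 1) :
    a = b ∨ a = c ∨ b = c := by
  rcases h1 with rfl|rfl <;> rcases h2 with rfl|rfl <;> rcases h3 with rfl|rfl <;> norm_num

lemma main_core (hn : 5 ≤ n) (c : Fin n → Fin n → ℝ)
    (hf : ∀ π : Equiv.Perm (Fin n), π.sign = 1 →
      (∑ t, c t (π t)) = 0 ∨ (∑ t, c t (π t)) = 1) :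
    (∃ a : Fin n, ∃ B : Set (Fin n), ∀ π : Equiv.Perm (Fin n), π.sign = 1 →
        ((∑ t, c t (π t)) = 1 ↔ π a ∈ B)) ∨
    (∃ x : Fin n, ∃ A : Set (Fin n), ∀ π : Equiv.Perm (Fin n), π.sign = 1 →
        ((∑ t, c t (π t)) = 1 ↔ π⁻¹ x ∈ A)) := by
  classical
  haveI : Nonempty (Fin n) := ⟨⟨0, by omega⟩⟩
  set Rel : Fin n → Fin n → Prop := fun p q => ∀ x y, c p x - c q x = c p y - c q y with hReldef
  have hRelrefl : ∀ p, Rel p p := by intro p x y; ring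
  have hnc : ∀ p q : Fin n, ¬ Rel p q → ∃ x y, c p x - c q x ≠ c p y - c q y := by
    intro p q hpq
    by_contra hcon
    push_neg at hcon
    exact hpq hcon
  have hRel3 : ∀ a b d : Fin n, a ≠ b → a ≠ d → b ≠ d → ¬ Rel a d → ¬ Rel b d → Rel a b := by
    intro a b d hab had hbd hnad hnbd
    by_contra hnab
    have C1 : Constr (fun x => c a x - c d x) (fun x => c b x - c d x) := by
      intro x y z hxy hxz hyz
      beta_reduce
      have h := T_mem hn c hf hab had hbd hxy hxz hyz
      rcases h with h|h|h
      · left; linarith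
      · right; left; linarith
      · right; right; linarith
    have C2 : Constr (fun x => c b x - c d x) (fun x => c a x - c d x) := by
      intro x y z hxy hxz hyz
      beta_reduce
      have h := T_mem hn c hf hab.symm hbd had hxy hxz hyz
      rcases h with h|h|h
      · left; linarith
      · right; left; linarith
      · right; right; linarith
    have C3 : Constr (fun t => (fun x => c a x - c d x) t - (fun x => c b x - c d x) t)
        (fun t => -(fun x => c b x - c d x) t) := by
      intro x y z hxy hxz hyz
      beta_reduce
      have h := T_mem hn c hf had hab hbd.symm hxy hxz hyz
      rcases h with h|h|h
      · left; linarith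
      · right; left; linarith
      · right; right; linarith
    have C4 : Constr (fun t => -(fun x => c b x - c d x) t)
        (fun t => (fun x => c a x - c d x) t - (fun x => c b x - c d x) t) := by
      intro x y z hxy hxz hyz
      beta_reduce
      have h := T_mem hn c hf had.symm hbd.symm hab hxy hxz hyz
      rcases h with h|h|h
      · left; linarith
      · right; left; linarith
      · right; right; linarith
    have hu : ∃ s t, (fun x => c a x - c d x) s ≠ (fun x => c a x - c d x) t := by
      obtain ⟨x, y, hxy⟩ := hnc a d hnad
      exact ⟨x, y, hxy⟩
    have hv : ∃ s t, (fun x => c b x - c d x) s ≠ (fun x => c b x - c d x) t := by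
      obtain ⟨x, y, hxy⟩ := hnc b d hnbd
      exact ⟨x, y, hxy⟩
    have huv : ∃ s t, (fun x => c a x - c d x) s - (fun x => c b x - c d x) s
        ≠ (fun x => c a x - c d x) t - (fun x => c b x - c d x) t := by
      obtain ⟨x, y, hxy⟩ := hnc a b hnab
      exact ⟨x, y, fun h => hxy (by beta_reduce at h; linarith)⟩
    exact rows3_false hn _ _ C1 C2 C3 C4 hu hv huv
  by_cases hconst : ∀ p q : Fin n, Rel p q
  · -- constant case
    left
    set x₀ : Fin n := Classical.arbitrary _ with hx₀
    set t₀ : Fin n := Classical.arbitrary _ with ht₀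
    have hcval : ∀ π : Equiv.Perm (Fin n),
        (∑ t, c t (π t)) = (∑ x, c t₀ x) + ∑ t, (c t x₀ - c t₀ x₀) := by
      intro π
      have hpt : ∀ t xx, c t xx = c t₀ xx + (c t x₀ - c t₀ x₀) := by
        intro t xx
        have h := hconst t t₀ xx x₀
        linarith
      calc ∑ t, c t (π t) = ∑ t, (c t₀ (π t) + (c t x₀ - c t₀ x₀)) :=
            Finset.sum_congr rfl fun t _ => hpt t (π t)
        _ = (∑ t, c t₀ (π t)) + ∑ t, (c t x₀ - c t₀ x₀) := Finset.sum_add_distrib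
        _ = (∑ x, c t₀ x) + ∑ t, (c t x₀ - c t₀ x₀) := by rw [Equiv.sum_comp π (c t₀)]
    refine ⟨t₀, {xx | (∑ x, c t₀ x) + (∑ t, (c t x₀ - c t₀ x₀)) = 1}, fun π hπ => ?_⟩
    rw [hcval π]
    exact Iff.rfl
  · push_neg at hconst
    obtain ⟨a₀, b₀, hnab⟩ := hconst
    set A₁ : Finset (Fin n) := Finset.univ.filter (fun t => ¬ Rel t b₀) with hA₁def
    have ha₀ : a₀ ∈ A₁ := Finset.mem_filter.mpr ⟨Finset.mem_univ _, hnab⟩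
    have hb₀ : b₀ ∉ A₁ := by
      intro h
      exact (Finset.mem_filter.mp h).2 (hRelrefl b₀)
    have hnotb₀ : ∀ t ∈ A₁, t ≠ b₀ := by
      intro t ht h
      exact (Finset.mem_filter.mp ht).2 (h ▸ hRelrefl b₀)
    have ha₀b₀ : a₀ ≠ b₀ := fun h => hnab (h ▸ hRelrefl b₀)
    have hclass : ∀ t ∈ A₁, Rel t a₀ := by
      intro t ht
      by_cases h : t = a₀
      · rw [h]; exact hRelrefl a₀
      · exact hRel3 t a₀ b₀ h (hnotb₀ t ht) ha₀b₀ (Finset.mem_filter.mp ht).2 hnab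
    set W : Fin n → ℝ := fun x => c a₀ x - c b₀ x with hWdef
    set x₀ : Fin n := Classical.arbitrary _ with hx₀
    set κ : Fin n → ℝ := fun t => c t x₀ - c b₀ x₀ - (if t ∈ A₁ then W x₀ else 0) with hκdef
    have hstruct : ∀ t xx, c t xx = c b₀ xx + (if t ∈ A₁ then W xx else 0) + κ t := by
      intro t xx
      have hWv : ∀ u, W u = c a₀ u - c b₀ u := fun u => rfl
      rw [hκdef]
      by_cases ht : t ∈ A₁
      · simp only [if_pos ht]
        have h := hclass t ht xx x₀
        rw [hWv xx, hWv x₀]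
        linarith
      · simp only [if_neg ht]
        have hR : Rel t b₀ := by
          by_contra h
          exact ht (Finset.mem_filter.mpr ⟨Finset.mem_univ _, h⟩)
        have h := hR xx x₀
        linarith
    set CC : ℝ := (∑ x, c b₀ x) + ∑ t, κ t with hCCdef
    have hFeq : ∀ π : Equiv.Perm (Fin n), (∑ t, c t (π t)) = CC + ∑ t ∈ A₁, W (π t) := by
      intro π
      calc ∑ t, c t (π t)
          = ∑ t, (c b₀ (π t) + (if t ∈ A₁ then W (π t) else 0) + κ t) :=
            Finset.sum_congr rfl fun t _ => hstruct t (π t)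
        _ = (∑ t, (c b₀ (π t) + (if t ∈ A₁ then W (π t) else 0))) + ∑ t, κ t :=
            Finset.sum_add_distrib
        _ = ((∑ t, c b₀ (π t)) + ∑ t, (if t ∈ A₁ then W (π t) else 0)) + ∑ t, κ t := by
            rw [Finset.sum_add_distrib]
        _ = ((∑ x, c b₀ x) + ∑ t ∈ A₁, W (π t)) + ∑ t, κ t := by
            rw [Equiv.sum_comp π (c b₀), Finset.sum_ite_mem, Finset.univ_inter]
        _ = CC + ∑ t ∈ A₁, W (π t) := by rw [hCCdef]; ring
    have hWnc : ∃ s t, W s ≠ W t := by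
      obtain ⟨x, y, hxy⟩ := hnc a₀ b₀ hnab
      exact ⟨x, y, hxy⟩
    have hk1 : 1 ≤ A₁.card := Finset.card_pos.mpr ⟨a₀, ha₀⟩
    have hsub : A₁ ⊆ Finset.univ.erase b₀ := fun t ht =>
      Finset.mem_erase.mpr ⟨hnotb₀ t ht, Finset.mem_univ _⟩
    have hkn : A₁.card ≤ n - 1 := by
      have h := Finset.card_le_card hsub
      rwa [Finset.card_erase_of_mem (Finset.mem_univ _), Finset.card_univ,
        Fintype.card_fin] at h
    by_cases hk : A₁.card = 1
    · -- row dictator at a₀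
      left
      obtain ⟨w, hw⟩ := Finset.card_eq_one.mp hk
      have hwa : w = a₀ := by
        have := ha₀
        rw [hw, Finset.mem_singleton] at this
        exact this.symm
      rw [hwa] at hw
      refine ⟨a₀, {xx | CC + W xx = 1}, fun π hπ => ?_⟩
      rw [hFeq π, hw, Finset.sum_singleton]
      exact Iff.rfl
    by_cases hk' : A₁.card = n - 1
    · -- row dictator at b₀
      left
      have hA₁ : A₁ = Finset.univ.erase b₀ := by
        apply Finset.eq_of_subset_of_card_le hsub
        rw [Finset.card_erase_of_mem (Finset.mem_univ _), Finset.card_univ, Fintype.card_fin]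
        omega
      refine ⟨b₀, {xx | CC + ((∑ x, W x) - W xx) = 1}, fun π hπ => ?_⟩
      rw [hFeq π, hA₁, Finset.sum_erase_eq_sub (Finset.mem_univ b₀), Equiv.sum_comp π W]
      exact Iff.rfl
    have hk2 : 2 ≤ A₁.card ∧ A₁.card + 2 ≤ n := by omega
    have hreal : ∀ S : Finset (Fin n), S.card = A₁.card →
        ∃ π : Equiv.Perm (Fin n), π.sign = 1 ∧ (∑ t, c t (π t)) = CC + ∑ x ∈ S, W x := by
      intro S hS
      obtain ⟨π, hπ, himg⟩ := exists_even_image hn A₁ S hS.symm hk2.2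
      refine ⟨π, hπ, ?_⟩
      rw [hFeq π]
      congr 1
      rw [← himg, Finset.sum_image (fun t₁ _ t₂ _ h => π.injective h)]
    -- W two-valued
    obtain ⟨βW, -, hβW'⟩ := Finset.exists_max_image Finset.univ W
      ⟨Classical.arbitrary _, Finset.mem_univ _⟩
    obtain ⟨αW, -, hαW'⟩ := Finset.exists_min_image Finset.univ W
      ⟨Classical.arbitrary _, Finset.mem_univ _⟩
    have hWup : ∀ t, W t ≤ W βW := fun t => hβW' t (Finset.mem_univ _)
    have hWlo : ∀ t, W αW ≤ W t := fun t => hαW' t (Finset.mem_univ _)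
    have hWlt : W αW < W βW := by
      rcases lt_or_ge (W αW) (W βW) with h | h
      · exact h
      · exfalso; obtain ⟨s, t, hst⟩ := hWnc
        exact hst (le_antisymm (le_trans (hWup s) (le_trans h (hWlo t)))
          (le_trans (hWup t) (le_trans h (hWlo s))))
    have hW2 : ∀ xx, W xx = W αW ∨ W xx = W βW := by
      by_contra hcon3
      push_neg at hcon3
      obtain ⟨t₂, ht₂α, ht₂β⟩ := hcon3
      have hd1 : t₂ ≠ αW := fun h => ht₂α (congrArg W h)
      have hd2 : t₂ ≠ βW := fun h => ht₂β (congrArg W h)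
      have hd3 : αW ≠ βW := fun h => (ne_of_lt hWlt) (congrArg W h)
      have hcard3 : ({αW, βW, t₂} : Finset (Fin n)).card = 3 := by
        rw [Finset.card_insert_of_notMem (by simp [hd3, hd1.symm]),
          Finset.card_insert_of_notMem (by simp [hd2.symm]), Finset.card_singleton]
      have hle : A₁.card - 1 ≤ (Finset.univ \ ({αW, βW, t₂} : Finset (Fin n))).card := by
        rw [Finset.card_sdiff_of_subset (Finset.subset_univ _), Finset.card_univ, Fintype.card_fin, hcard3]
        omega
      obtain ⟨S₀, hS₀sub, hS₀card⟩ := Finset.exists_subset_card_eq hle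
      have hnotmem : ∀ w ∈ ({αW, βW, t₂} : Finset (Fin n)), w ∉ S₀ := by
        intro w hw hmem
        have := hS₀sub hmem
        rw [Finset.mem_sdiff] at this
        exact this.2 hw
      have hano : αW ∉ S₀ := hnotmem αW (by simp)
      have hbno : βW ∉ S₀ := hnotmem βW (by simp)
      have htno : t₂ ∉ S₀ := hnotmem t₂ (by simp)
      have hinscard : ∀ w : Fin n, w ∉ S₀ → (insert w S₀).card = A₁.card := by
        intro w hw
        rw [Finset.card_insert_of_notMem hw, hS₀card]
        omega
      obtain ⟨π1, hπ1, hv1⟩ := hreal (insert αW S₀) (hinscard αW hano)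
      obtain ⟨π2, hπ2, hv2⟩ := hreal (insert βW S₀) (hinscard βW hbno)
      obtain ⟨π3, hπ3, hv3⟩ := hreal (insert t₂ S₀) (hinscard t₂ htno)
      rw [Finset.sum_insert hano] at hv1
      rw [Finset.sum_insert hbno] at hv2
      rw [Finset.sum_insert htno] at hv3
      have f1 := hf π1 hπ1
      have f2 := hf π2 hπ2
      have f3 := hf π3 hπ3
      rw [hv1] at f1; rw [hv2] at f2; rw [hv3] at f3
      rcases three_vals f1 f2 f3 with h | h | h
      · exact (ne_of_lt hWlt) (by linarith)
      · exact ht₂α (by linarith)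
      · exact ht₂β (by linarith)
    set ε : ℝ := W βW - W αW with hεdef
    have hεpos : 0 < ε := by rw [hεdef]; linarith
    set X : Finset (Fin n) := Finset.univ.filter (fun xx => W xx = W βW) with hXdef
    have hβX : βW ∈ X := Finset.mem_filter.mpr ⟨Finset.mem_univ _, rfl⟩
    have hαX : αW ∉ X := by
      intro h
      exact (ne_of_lt hWlt) (Finset.mem_filter.mp h).2
    have hWx : ∀ xx, W xx = W αW + (if xx ∈ X then ε else 0) := by
      intro xx
      by_cases h : xx ∈ X
      · rw [if_pos h, hεdef]
        have := (Finset.mem_filter.mp h).2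
        linarith
      · rw [if_neg h]
        have : ¬ W xx = W βW := fun h' => h (Finset.mem_filter.mpr ⟨Finset.mem_univ _, h'⟩)
        have := (hW2 xx).resolve_right this
        linarith
    have hm1 : 1 ≤ X.card := Finset.card_pos.mpr ⟨βW, hβX⟩
    have hmn : X.card ≤ n - 1 := by
      have hsubX : X ⊆ Finset.univ.erase αW := by
        intro t ht
        refine Finset.mem_erase.mpr ⟨fun h => hαX (h ▸ ht), Finset.mem_univ _⟩
      have h := Finset.card_le_card hsubX
      rwa [Finset.card_erase_of_mem (Finset.mem_univ _), Finset.card_univ,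
        Fintype.card_fin] at h
    by_cases hm : X.card = 1
    · -- column dictator at βW
      right
      obtain ⟨w, hw⟩ := Finset.card_eq_one.mp hm
      have hwβ : w = βW := by
        have := hβX
        rw [hw, Finset.mem_singleton] at this
        exact this.symm
      rw [hwβ] at hw
      have hXc : ∀ u : Fin n, u ∈ X ↔ u = βW := by
        intro u
        constructor
        · intro h
          have h2 : u ∈ ({βW} : Finset (Fin n)) := by rw [← hw]; exact h
          exact Finset.mem_singleton.mp h2
        · intro h; rw [h]; exact hβX
      have hsum : ∀ π : Equiv.Perm (Fin n), (∑ t ∈ A₁, W (π t))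
          = (A₁.card : ℝ) * W αW + (if π⁻¹ βW ∈ A₁ then ε else 0) := by
        intro π
        calc ∑ t ∈ A₁, W (π t) = ∑ t ∈ A₁, (W αW + (if π t ∈ X then ε else 0)) :=
              Finset.sum_congr rfl fun t _ => hWx (π t)
          _ = (A₁.card : ℝ) * W αW + ∑ t ∈ A₁, (if π t ∈ X then ε else 0) := by
              rw [Finset.sum_add_distrib, Finset.sum_const, nsmul_eq_mul]
          _ = (A₁.card : ℝ) * W αW + (if π⁻¹ βW ∈ A₁ then ε else 0) := by
              congr 1
              have hcond : ∀ t : Fin n, (π t ∈ X) = (t = π⁻¹ βW) := by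
                intro t
                apply propext
                constructor
                · intro h
                  have h2 := (hXc _).mp h
                  rw [← h2]; simp
                · intro h
                  apply (hXc _).mpr
                  rw [h]; simp
              calc ∑ t ∈ A₁, (if π t ∈ X then ε else 0)
                  = ∑ t ∈ A₁, (if t = π⁻¹ βW then ε else 0) :=
                    Finset.sum_congr rfl fun t _ => by simp only [hcond t]
                _ = _ := Finset.sum_ite_eq' A₁ (π⁻¹ βW) (fun _ => ε)
      refine ⟨βW, {t | CC + ((A₁.card : ℝ) * W αW + (if t ∈ A₁ then ε else 0)) = 1}, fun π hπ => ?_⟩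
      rw [hFeq π, hsum π]
      exact Iff.rfl
    by_cases hm' : X.card = n - 1
    · -- column dictator at αW
      right
      have hX : X = Finset.univ.erase αW := by
        apply Finset.eq_of_subset_of_card_le
        · intro t ht
          exact Finset.mem_erase.mpr ⟨fun h => hαX (h ▸ ht), Finset.mem_univ _⟩
        · rw [Finset.card_erase_of_mem (Finset.mem_univ _), Finset.card_univ, Fintype.card_fin]
          omega
      have hWx' : ∀ xx, W xx = W βW - (if xx = αW then ε else 0) := by
        intro xx
        by_cases h : xx = αW
        · rw [if_pos h, h, hεdef]; ring
        · rw [if_neg h]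
          have : xx ∈ X := by
            rw [hX]
            exact Finset.mem_erase.mpr ⟨h, Finset.mem_univ _⟩
          have := (Finset.mem_filter.mp this).2
          linarith
      have hsum : ∀ π : Equiv.Perm (Fin n), (∑ t ∈ A₁, W (π t))
          = (A₁.card : ℝ) * W βW - (if π⁻¹ αW ∈ A₁ then ε else 0) := by
        intro π
        calc ∑ t ∈ A₁, W (π t) = ∑ t ∈ A₁, (W βW - (if π t = αW then ε else 0)) :=
              Finset.sum_congr rfl fun t _ => hWx' (π t)
          _ = (A₁.card : ℝ) * W βW - ∑ t ∈ A₁, (if π t = αW then ε else 0) := by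
              rw [Finset.sum_sub_distrib, Finset.sum_const, nsmul_eq_mul]
          _ = (A₁.card : ℝ) * W βW - (if π⁻¹ αW ∈ A₁ then ε else 0) := by
              congr 1
              have hcond : ∀ t : Fin n, (π t = αW) = (t = π⁻¹ αW) := by
                intro t
                apply propext
                constructor
                · intro h; rw [← h]; simp
                · intro h; rw [h]; simp
              calc ∑ t ∈ A₁, (if π t = αW then ε else 0)
                  = ∑ t ∈ A₁, (if t = π⁻¹ αW then ε else 0) :=
                    Finset.sum_congr rfl fun t _ => by simp only [hcond t]
                _ = _ := Finset.sum_ite_eq' A₁ (π⁻¹ αW) (fun _ => ε)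
      refine ⟨αW, {t | CC + ((A₁.card : ℝ) * W βW - (if t ∈ A₁ then ε else 0)) = 1}, fun π hπ => ?_⟩
      rw [hFeq π, hsum π]
      exact Iff.rfl
    -- middle m : contradiction
    exfalso
    have hm2 : 2 ≤ X.card ∧ X.card + 2 ≤ n := by omega
    have hjj : ∀ jj : ℕ, jj ≤ X.card → A₁.card ≤ jj + (n - X.card) → jj ≤ A₁.card →
        ∃ π : Equiv.Perm (Fin n), π.sign = 1 ∧
          (∑ t, c t (π t)) = CC + ((A₁.card : ℝ) * W αW + (jj : ℝ) * ε) := by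
      intro jj h1 h2 h3
      obtain ⟨T₁, hT₁sub, hT₁card⟩ := Finset.exists_subset_card_eq h1
      have hcompl : A₁.card - jj ≤ Xᶜ.card := by
        rw [Finset.card_compl, Fintype.card_fin]
        omega
      obtain ⟨T₂, hT₂sub, hT₂card⟩ := Finset.exists_subset_card_eq hcompl
      have hdisj : Disjoint T₁ T₂ := by
        rw [Finset.disjoint_left]
        intro x hx1 hx2
        exact (Finset.mem_compl.mp (hT₂sub hx2)) (hT₁sub hx1)
      have hScard : (T₁ ∪ T₂).card = A₁.card := by
        rw [Finset.card_union_of_disjoint hdisj, hT₁card, hT₂card]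
        omega
      obtain ⟨π, hπ, hval⟩ := hreal (T₁ ∪ T₂) hScard
      refine ⟨π, hπ, ?_⟩
      rw [hval]
      congr 1
      have hint : (T₁ ∪ T₂) ∩ X = T₁ := by
        ext x
        simp only [Finset.mem_inter, Finset.mem_union]
        constructor
        · rintro ⟨h | h, hX2⟩
          · exact h
          · exact absurd hX2 (Finset.mem_compl.mp (hT₂sub h))
        · intro h
          exact ⟨Or.inl h, hT₁sub h⟩
      calc ∑ x ∈ T₁ ∪ T₂, W x = ∑ x ∈ T₁ ∪ T₂, (W αW + if x ∈ X then ε else 0) :=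
            Finset.sum_congr rfl fun x _ => hWx x
        _ = ((T₁ ∪ T₂).card : ℝ) * W αW + ∑ x ∈ T₁ ∪ T₂, (if x ∈ X then ε else 0) := by
            rw [Finset.sum_add_distrib, Finset.sum_const, nsmul_eq_mul]
        _ = ((T₁ ∪ T₂).card : ℝ) * W αW + (((T₁ ∪ T₂) ∩ X).card : ℝ) * ε := by
            rw [Finset.sum_ite_mem, Finset.sum_const, nsmul_eq_mul]
        _ = (A₁.card : ℝ) * W αW + (jj : ℝ) * ε := by rw [hScard, hint, hT₁card]
    set j : ℕ := A₁.card + X.card - n with hjdef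
    have harith : j + 2 ≤ X.card ∧ j + 2 ≤ A₁.card ∧
        (∀ i : ℕ, i ≤ j + 2 → A₁.card ≤ i + (n - X.card) → True) := by
      refine ⟨by omega, by omega, fun _ _ _ => trivial⟩
    obtain ⟨π1, hπ1, hv1⟩ := hjj j (by omega) (by omega) (by omega)
    obtain ⟨π2, hπ2, hv2⟩ := hjj (j+1) (by omega) (by omega) (by omega)
    obtain ⟨π3, hπ3, hv3⟩ := hjj (j+2) (by omega) (by omega) (by omega)
    have f1 := hf π1 hπ1
    have f2 := hf π2 hπ2
    have f3 := hf π3 hπ3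
    rw [hv1] at f1; rw [hv2] at f2; rw [hv3] at f3
    have hc1 : ((j : ℝ)) + 1 = ((j+1 : ℕ) : ℝ) := by push_cast; ring
    have hc2 : ((j : ℝ)) + 2 = ((j+2 : ℕ) : ℝ) := by push_cast; ring
    rcases three_vals f1 f2 f3 with h | h | h
    · rw [← hc1] at h
      have : ε = 0 := by linarith
      linarith
    · rw [← hc2] at h
      have : ε = 0 := by linarith
      linarith
    · rw [← hc1, ← hc2] at h
      have : ε = 0 := by linarith
      linarith


end CLAux

/-- For `n ≥ 5`, every Cameron–Liebler set of the alternating group `Alt(n)` with its natural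
action on `{1,…,n}` is canonical, i.e. a disjoint union of stars `Alt(n)_{a→b}`. -/
theorem alternating_cl_canonical (n : ℕ) (hn : 5 ≤ n)
    (L : Set (alternatingGroup (Fin n))) (hL : IsCLSet (alternatingGroup (Fin n)) (Fin n) L) :
    ∃ J : Set (Fin n × Fin n),
      (∀ p ∈ J, ∀ q ∈ J, p ≠ q →
        Disjoint {g : alternatingGroup (Fin n) | g • p.1 = p.2}
          {g : alternatingGroup (Fin n) | g • q.1 = q.2}) ∧
      L = ⋃ p ∈ J, {g : alternatingGroup (Fin n) | g • p.1 = p.2} := by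
  classical
  obtain ⟨c, hc⟩ := exists_coeffs L hL
  have hsign : ∀ g : alternatingGroup (Fin n), ((g : Equiv.Perm (Fin n)).sign = 1) :=
    fun g => Equiv.Perm.mem_alternatingGroup.mp g.2
  have hf : ∀ π : Equiv.Perm (Fin n), π.sign = 1 →
      (∑ t, c t (π t)) = 0 ∨ (∑ t, c t (π t)) = 1 := by
    intro π hπ
    set g : alternatingGroup (Fin n) := ⟨π, Equiv.Perm.mem_alternatingGroup.mpr hπ⟩ with hg
    by_cases h : g ∈ L
    · right; exact (hc g).1 h
    · left; exact (hc g).2 h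
  have hmem : ∀ g : alternatingGroup (Fin n),
      (g ∈ L ↔ (∑ t, c t ((g : Equiv.Perm (Fin n)) t)) = 1) := by
    intro g
    constructor
    · exact (hc g).1
    · intro h
      by_contra hgl
      exact one_ne_zero (h.symm.trans ((hc g).2 hgl))
  rcases main_core hn c hf with ⟨a, B, hB⟩ | ⟨x, A, hA⟩
  · refine ⟨{p : Fin n × Fin n | p.1 = a ∧ p.2 ∈ B}, ?_, ?_⟩
    · rintro ⟨p1, p2⟩ ⟨hp1, hp2⟩ ⟨q1, q2⟩ ⟨hq1, hq2⟩ hne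
      have hne2 : p2 ≠ q2 := by
        intro h
        apply hne
        rw [Prod.ext_iff]
        exact ⟨hp1.trans hq1.symm, h⟩
      rw [Set.disjoint_left]
      intro g hg1 hg2
      simp only [Set.mem_setOf_eq] at hg1 hg2
      apply hne2
      rw [← hg1, ← hg2]
      simp only at hp1 hq1
      rw [hp1, hq1]
    · ext g
      simp only [Set.mem_iUnion, Set.mem_setOf_eq]
      constructor
      · intro hgL
        exact ⟨(a, (g : Equiv.Perm (Fin n)) a), ⟨rfl, (hB _ (hsign g)).mp ((hmem g).mp hgL)⟩, rfl⟩
      · rintro ⟨⟨p1, p2⟩, ⟨hp1, hp2⟩, hstar⟩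
        apply (hmem g).mpr
        apply (hB _ (hsign g)).mpr
        simp only at hp1 hstar
        subst hp1
        rw [← hstar] at hp2
        exact hp2
  · refine ⟨{p : Fin n × Fin n | p.1 ∈ A ∧ p.2 = x}, ?_, ?_⟩
    · rintro ⟨p1, p2⟩ ⟨hp1, hp2⟩ ⟨q1, q2⟩ ⟨hq1, hq2⟩ hne
      have hne1 : p1 ≠ q1 := by
        intro h
        apply hne
        rw [Prod.ext_iff]
        exact ⟨h, hp2.trans hq2.symm⟩
      rw [Set.disjoint_left]
      intro g hg1 hg2
      simp only [Set.mem_setOf_eq] at hg1 hg2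
      apply hne1
      simp only at hp2 hq2
      have e1 : (g : Equiv.Perm (Fin n)) p1 = x := by rw [← hp2]; exact hg1
      have e2 : (g : Equiv.Perm (Fin n)) q1 = x := by rw [← hq2]; exact hg2
      exact (g : Equiv.Perm (Fin n)).injective (e1.trans e2.symm)
    · ext g
      simp only [Set.mem_iUnion, Set.mem_setOf_eq]
      constructor
      · intro hgL
        have hx := (hA _ (hsign g)).mp ((hmem g).mp hgL)
        refine ⟨((((g : Equiv.Perm (Fin n)))⁻¹ x : Fin n), x), ⟨hx, rfl⟩, ?_⟩
        show (g : Equiv.Perm (Fin n)) (((g : Equiv.Perm (Fin n)))⁻¹ x) = x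
        simp
      · rintro ⟨⟨p1, p2⟩, ⟨hp1, hp2⟩, hstar⟩
        apply (hmem g).mpr
        apply (hA _ (hsign g)).mpr
        simp only at hp1 hp2 hstar
        have e1 : (g : Equiv.Perm (Fin n)) p1 = x := by rw [← hp2]; exact hstar
        have e2 : ((g : Equiv.Perm (Fin n)))⁻¹ x = p1 := by rw [← e1]; simp
        rw [e2]
        exact hp1
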